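/- For k ≥ 1 define the integer N_k := ℓ + card{(x, y) ∈ E_k × E_k : f.denom evaluated at x (under the algebra map Fq → E_k) is nonzero and y^p − y = f.eval (algebraMap Fq E_k) x}. Suppose Z is a formal power series over K with constant coefficient 1 satisfying X · (derivative of Z) = Z · ∑_{k≥1} N_k X^k, and for each unit u ∈ (ZMod p)ˣ suppose L_u is a formal power series over K with constant coefficient 1 satisfying X · (derivative of L_u) = L_u · ∑_{k≥1} S_k^{(u)} X^k. Then (1 − X)·(1 − q·X)·Z = ∏_{u ∈ (ZMod p)ˣ} L_u as formal power series over K. (This is the identity Zeta(C_f;T) = N_{ℚ(ζ_p)/ℚ}(L(f;T)) / ((1−T)(1−qT)) relating the zeta function of the Artin–Schreier curve y^p − y = f(x) to the L-functions of the exponential sums of the multiples of f.) -/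

import Mathlib

open Polynomial Finset

namespace ASaux

open PowerSeries

theorem ode_unique {K : Type*} [Field K] [CharZero K] {P Q A : PowerSeries K}
    (hA : PowerSeries.constantCoeff A = 0)
    (h0 : PowerSeries.constantCoeff P = PowerSeries.constantCoeff Q)
    (hP : PowerSeries.X * P.derivativeFun = P * A)
    (hQ : PowerSeries.X * Q.derivativeFun = Q * A) : P = Q := by
  ext n
  induction n using Nat.strong_induction_on with
  | _ n ih =>
    match n with
    | 0 => simpa [PowerSeries.coeff_zero_eq_constantCoeff] using h0
    | Nat.succ m =>
      have hPc := congrArg (PowerSeries.coeff (m + 1)) hP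
      have hQc := congrArg (PowerSeries.coeff (m + 1)) hQ
      rw [PowerSeries.coeff_succ_X_mul, (show ∀ (f : PowerSeries K) (n : ℕ), PowerSeries.coeff n f.derivativeFun = PowerSeries.coeff (n + 1) f * (n + 1) from fun f n => PowerSeries.coeff_derivative f n)] at hPc hQc
      have hsum : PowerSeries.coeff (m + 1) (P * A)
          = PowerSeries.coeff (m + 1) (Q * A) := by
        rw [PowerSeries.coeff_mul, PowerSeries.coeff_mul]
        refine Finset.sum_congr rfl fun ij hij => ?_
        have hm := Finset.HasAntidiagonal.mem_antidiagonal.mp hij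
        rcases Nat.eq_zero_or_pos ij.2 with h2 | h2
        · rw [h2, PowerSeries.coeff_zero_eq_constantCoeff, hA, mul_zero, mul_zero]
        · have h1 : ij.1 < m + 1 := by omega
          rw [ih ij.1 h1]
      have hkey : PowerSeries.coeff (m + 1) P * ((m : K) + 1)
          = PowerSeries.coeff (m + 1) Q * ((m : K) + 1) := by
        rw [hPc, hQc, hsum]
      have hne : ((m : K) + 1) ≠ 0 := by
        have : ((m : K) + 1) = ((m + 1 : ℕ) : K) := by push_cast; ring
        rw [this]
        exact Nat.cast_ne_zero.mpr (Nat.succ_ne_zero m)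
      exact mul_right_cancel₀ hne hkey

theorem ode_prod {R : Type*} [CommRing R] {ι : Type*} (s : Finset ι)
    (Lf Af : ι → PowerSeries R)
    (h : ∀ i ∈ s, PowerSeries.X * (Lf i).derivativeFun = Lf i * Af i) :
    PowerSeries.X * (∏ i ∈ s, Lf i).derivativeFun
      = (∏ i ∈ s, Lf i) * ∑ i ∈ s, Af i := by
  classical
  induction s using Finset.induction with
  | empty => simp [PowerSeries.derivativeFun_one]
  | @insert a s ha ih =>
    have h1 := h a (Finset.mem_insert_self a s)
    have ih' := ih fun i hi => h i (Finset.mem_insert_of_mem hi)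
    rw [Finset.prod_insert ha, Finset.sum_insert ha, PowerSeries.derivativeFun_mul,
      smul_eq_mul, smul_eq_mul, mul_add]
    calc PowerSeries.X * (Lf a * (∏ i ∈ s, Lf i).derivativeFun)
        + PowerSeries.X * ((∏ i ∈ s, Lf i) * (Lf a).derivativeFun)
        = Lf a * (PowerSeries.X * (∏ i ∈ s, Lf i).derivativeFun)
          + (∏ i ∈ s, Lf i) * (PowerSeries.X * (Lf a).derivativeFun) := by ring
      _ = Lf a * ((∏ i ∈ s, Lf i) * ∑ i ∈ s, Af i)
          + (∏ i ∈ s, Lf i) * (Lf a * Af a) := by rw [ih', h1]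
      _ = Lf a * (∏ i ∈ s, Lf i) * (Af a + ∑ i ∈ s, Af i) := by ring

theorem geom_aux {R : Type*} [CommRing R] (c : R) :
    (1 - PowerSeries.C c * PowerSeries.X)
        * PowerSeries.mk (fun k => if k = 0 then 0 else c ^ k)
      = PowerSeries.C c * PowerSeries.X := by
  set G := PowerSeries.mk (fun k => if k = 0 then (0 : R) else c ^ k) with hG
  have hre : (1 - PowerSeries.C c * PowerSeries.X) * G
      = G - PowerSeries.C c * (PowerSeries.X * G) := by ring
  ext n
  rw [hre, map_sub, PowerSeries.coeff_C_mul, PowerSeries.coeff_C_mul,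
    PowerSeries.coeff_X]
  match n with
  | 0 => simp [hG]
  | 1 => simp [hG, PowerSeries.coeff_succ_X_mul]
  | (m + 2) =>
    rw [PowerSeries.coeff_succ_X_mul]
    simp only [hG, PowerSeries.coeff_mk]
    norm_num
    rw [pow_succ, mul_comm, sub_self, if_neg (by omega)]

theorem derivF_one_sub {R : Type*} [CommRing R] (c : R) :
    (1 - PowerSeries.C c * PowerSeries.X).derivativeFun = - PowerSeries.C c := by
  ext n
  rw [(show ∀ (f : PowerSeries R) (n : ℕ), PowerSeries.coeff n f.derivativeFun = PowerSeries.coeff (n + 1) f * (n + 1) from fun f n => PowerSeries.coeff_derivative f n), map_sub, PowerSeries.coeff_C_mul, PowerSeries.coeff_X]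
  match n with
  | 0 => simp
  | (m + 1) =>
    simp [PowerSeries.coeff_one, PowerSeries.coeff_C]

end ASaux

namespace ASaux2

variable {p : ℕ} [hp : Fact p.Prime] {F : Type} [Field F] [Fintype F]
  [Algebra (ZMod p) F]

theorem trace_frob (y : F) :
    Algebra.trace (ZMod p) F (y ^ p) = Algebra.trace (ZMod p) F y := by
  haveI : CharP F p := charP_of_injective_algebraMap' (ZMod p) (A := F) p
  haveI : FiniteDimensional (ZMod p) F := Module.finite_iff_finite.mpr inferInstance
  apply (algebraMap (ZMod p) F).injective
  rw [trace_eq_sum_automorphisms, trace_eq_sum_automorphisms]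
  have h1 : ∑ σ : F ≃ₐ[ZMod p] F, σ (y ^ p) = (∑ σ : F ≃ₐ[ZMod p] F, σ y) ^ p := by
    rw [sum_pow_char]
    exact Finset.sum_congr rfl fun σ _ => by rw [map_pow]
  rw [h1, ← trace_eq_sum_automorphisms, ← map_pow, ZMod.pow_card]

theorem AS_card (t : F) :
    Nat.card {y : F // y ^ p - y = t} =
      if Algebra.trace (ZMod p) F t = 0 then p else 0 := by
  classical
  haveI : CharP F p := charP_of_injective_algebraMap' (ZMod p) (A := F) p
  haveI : FiniteDimensional (ZMod p) F := Module.finite_iff_finite.mpr inferInstance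
  set φ : F →+ F :=
    { toFun := fun y => y ^ p - y
      map_zero' := by simp [hp.out.ne_zero]
      map_add' := fun x y => by
        show (x + y) ^ p - (x + y) = (x ^ p - x) + (y ^ p - y)
        rw [add_pow_char]; ring } with hφ
  have hφapp : ∀ y : F, φ y = y ^ p - y := fun y => rfl
  have h1p : (1 : ℕ) ≠ p := by have := hp.out.two_le; omega
  have hkerle : Nat.card φ.ker ≤ p := by
    have hpoly : (X ^ p - X : F[X]) ≠ 0 := by
      intro h
      have h2 : (X ^ p - X : F[X]).coeff p = 1 := by
        rw [Polynomial.coeff_sub, Polynomial.coeff_X_pow, if_pos rfl,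
          Polynomial.coeff_X, if_neg h1p, sub_zero]
      rw [h] at h2
      simp at h2
    have hinj : Function.Injective
        (fun y : φ.ker => (⟨(y : F), by
          rw [Multiset.mem_toFinset, Polynomial.mem_roots hpoly]
          have hy := y.2
          rw [AddMonoidHom.mem_ker, hφapp] at hy
          simp [Polynomial.IsRoot, hy]⟩ :
          ((X ^ p - X : F[X]).roots.toFinset : Finset F))) := by
      intro a b hab
      exact Subtype.ext (by simpa using congrArg Subtype.val hab)
    calc Nat.card φ.ker ≤ Nat.card ((X ^ p - X : F[X]).roots.toFinset : Finset F) :=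
          Nat.card_le_card_of_injective _ hinj
      _ = (X ^ p - X : F[X]).roots.toFinset.card := Nat.card_eq_finsetCard _
      _ ≤ Multiset.card (X ^ p - X : F[X]).roots := Multiset.toFinset_card_le _
      _ ≤ (X ^ p - X : F[X]).natDegree := Polynomial.card_roots' _
      _ ≤ p := by
          refine le_trans (Polynomial.natDegree_sub_le _ _) ?_
          simp only [Polynomial.natDegree_X_pow, Polynomial.natDegree_X]
          exact max_le le_rfl hp.out.one_lt.le
  have hkerge : p ≤ Nat.card φ.ker := by
    have hinj : Function.Injective (fun c : ZMod p => (⟨algebraMap (ZMod p) F c, by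
        rw [AddMonoidHom.mem_ker, hφapp, ← map_pow, ZMod.pow_card, sub_self]⟩ : φ.ker)) := by
      intro a b hab
      exact (algebraMap (ZMod p) F).injective (by simpa using congrArg Subtype.val hab)
    calc p = Nat.card (ZMod p) := by simp [Nat.card_eq_fintype_card]
      _ ≤ Nat.card φ.ker := Nat.card_le_card_of_injective _ hinj
  have hker : Nat.card φ.ker = p := le_antisymm hkerle hkerge
  have hrange : Nat.card φ.range * p = Nat.card F := by
    rw [← hker]
    rw [AddSubgroup.card_eq_card_quotient_mul_card_addSubgroup (φ.ker)]
    congr 1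
    exact (Nat.card_congr (QuotientAddGroup.quotientKerEquivRange φ).toEquiv).symm
  set T : F →+ ZMod p := (Algebra.trace (ZMod p) F).toAddMonoidHom with hT
  have hTapp : ∀ y : F, T y = Algebra.trace (ZMod p) F y := fun y => rfl
  have hTsurj : Function.Surjective T := Algebra.trace_surjective (ZMod p) F
  have hTker : Nat.card T.ker * p = Nat.card F := by
    rw [AddSubgroup.card_eq_card_quotient_mul_card_addSubgroup (T.ker), mul_comm]
    congr 1
    rw [Nat.card_congr (QuotientAddGroup.quotientKerEquivOfSurjective T hTsurj).toEquiv]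
    simp [Nat.card_eq_fintype_card]
  have hsub : (φ.range : Set F) ⊆ (T.ker : Set F) := by
    rintro x ⟨y, rfl⟩
    simp only [SetLike.mem_coe, AddMonoidHom.mem_ker, hTapp, hφapp, map_sub, trace_frob,
      sub_self]
  have hcards : Nat.card T.ker = Nat.card φ.range := by
    refine Nat.eq_of_mul_eq_mul_right hp.out.pos ?_
    rw [hTker, hrange]
  have heq : (φ.range : Set F) = (T.ker : Set F) := by
    apply Set.eq_of_subset_of_ncard_le hsub
    rw [← Nat.card_coe_set_eq, ← Nat.card_coe_set_eq]
    have e1 : Nat.card ((φ.range : Set F) : Type) = Nat.card φ.range :=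
      Nat.card_congr (Equiv.subtypeEquivRight fun x => SetLike.mem_coe)
    have e2 : Nat.card ((T.ker : Set F) : Type) = Nat.card T.ker :=
      Nat.card_congr (Equiv.subtypeEquivRight fun x => SetLike.mem_coe)
    rw [e1, e2, hcards]
  by_cases ht : Algebra.trace (ZMod p) F t = 0
  · rw [if_pos ht]
    have htmem : t ∈ (φ.range : Set F) := by
      rw [heq]
      simpa [AddMonoidHom.mem_ker, hTapp] using ht
    obtain ⟨y₀, hy₀⟩ := htmem
    have e : {y : F // y ^ p - y = t} ≃ φ.ker :=
      { toFun := fun y => ⟨y.1 - y₀, by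
          rw [AddMonoidHom.mem_ker, map_sub, hy₀, hφapp, y.2, sub_self]⟩
        invFun := fun z => ⟨z.1 + y₀, by
          have hz := z.2
          rw [AddMonoidHom.mem_ker] at hz
          have hzz : φ (z.1 + y₀) = t := by rw [map_add, hz, hy₀, zero_add]
          rw [hφapp] at hzz
          exact hzz⟩
        left_inv := fun y => Subtype.ext (by simp)
        right_inv := fun z => Subtype.ext (by simp) }
    rw [Nat.card_congr e, hker]
  · rw [if_neg ht]
    have : IsEmpty {y : F // y ^ p - y = t} := by
      refine ⟨fun y => ht ?_⟩
      have hyy : φ y.1 = t := by rw [hφapp]; exact y.2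
      have ht' : t ∈ (φ.range : Set F) := ⟨y.1, hyy⟩
      rw [heq] at ht'
      simpa [AddMonoidHom.mem_ker, hTapp] using ht'
    simp [Nat.card_of_isEmpty]

end ASaux2

open scoped Classical in
/-- The zeta function of the Artin–Schreier curve `y^p - y = f(x)` decomposes as the product
of the `L`-functions of the exponential sums of the nonzero multiples of `f`:
`(1 - T)(1 - qT) · Zeta(C_f; T) = ∏_{u ∈ (ZMod p)ˣ} L(u·f; T)`, where `Zeta` and the `L_u`
are characterized by the logarithmic-derivative conditions
`T·Z' = Z·∑_{k ≥ 1} N_k T^k` and `T·L_u' = L_u·∑_{k ≥ 1} S_k^{(u)} T^k`. -/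
theorem zeta_artinSchreier_eq_prod_L
    (p : ℕ) [hp : Fact p.Prime] (a : ℕ) (ha : 1 ≤ a)
    (Fq : Type) [Field Fq] [Fintype Fq] (hcard : Fintype.card Fq = p ^ a)
    (ℓ : ℕ) (hℓ : 1 ≤ ℓ)
    (θ : Fin (ℓ - 1) → Fq) (hθ : Function.Injective θ)
    (d0 : ℕ) (dθ : Fin (ℓ - 1) → ℕ)
    (hd0 : 0 < d0) (hdθ : ∀ j, 0 < dθ j)
    (hd0p : Nat.Coprime p d0) (hdθp : ∀ j, Nat.Coprime p (dθ j))
    (hnot : ¬(ℓ = 1 ∧ d0 = 1))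
    (f : RatFunc Fq)
    (hden : f.denom = ∏ j : Fin (ℓ - 1), (X - C (θ j)) ^ dθ j)
    (hnum : f.num.natDegree = d0 + ∑ j : Fin (ℓ - 1), dθ j)
    (ψ : AddChar (ZMod p) (CyclotomicField p ℚ)) (hψ : ψ ≠ 1)
    (E : ℕ → Type) [∀ k, Field (E k)] [∀ k, Fintype (E k)]
    [∀ k, Algebra Fq (E k)] [∀ k, Algebra (ZMod p) (E k)]
    (hE : ∀ k, 1 ≤ k → Fintype.card (E k) = (p ^ a) ^ k)
    (S : ZMod p → ℕ → CyclotomicField p ℚ)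
    (hS : ∀ (c : ZMod p) (k : ℕ), 1 ≤ k → S c k =
      ∑ x ∈ univ.filter
          (fun x : E k => Polynomial.eval₂ (algebraMap Fq (E k)) x f.denom ≠ 0),
        ψ (c * (Algebra.trace (ZMod p) (E k)) (RatFunc.eval (algebraMap Fq (E k)) x f)))
    (N : ℕ → ℕ)
    (hN : ∀ k, 1 ≤ k → N k = ℓ + Nat.card {xy : E k × E k //
        Polynomial.eval₂ (algebraMap Fq (E k)) xy.1 f.denom ≠ 0 ∧
        xy.2 ^ p - xy.2 = RatFunc.eval (algebraMap Fq (E k)) xy.1 f})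
    (Z : PowerSeries (CyclotomicField p ℚ))
    (hZ0 : PowerSeries.constantCoeff Z = 1)
    (hZ : PowerSeries.X * Z.derivativeFun =
      Z * PowerSeries.mk (fun k =>
        if k = 0 then 0 else ((N k : ℕ) : CyclotomicField p ℚ)))
    (L : (ZMod p)ˣ → PowerSeries (CyclotomicField p ℚ))
    (hL0 : ∀ u, PowerSeries.constantCoeff (L u) = 1)
    (hL : ∀ u, PowerSeries.X * (L u).derivativeFun =
      L u * PowerSeries.mk (fun k => if k = 0 then 0 else S (u : ZMod p) k)) :
    (1 - PowerSeries.X) *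
        (1 - PowerSeries.C ((p ^ a : ℕ) : CyclotomicField p ℚ) *
          PowerSeries.X) * Z =
      ∏ u : (ZMod p)ˣ, L u := by
  classical
  haveI : CharZero (CyclotomicField p ℚ) :=
    charZero_of_injective_algebraMap (algebraMap ℚ _).injective
  set q : CyclotomicField p ℚ := ((p ^ a : ℕ) : CyclotomicField p ℚ)
    with hqdef
  -- Step 1: the key coefficient identity
  have key : ∀ n : ℕ, 1 ≤ n →
      ((N n : ℕ) : CyclotomicField p ℚ)
        = 1 + q ^ n + ∑ u : (ZMod p)ˣ, S (u : ZMod p) n := by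
    intro n hn
    have hfiltcard :
        (univ.filter (fun x : E n =>
          Polynomial.eval₂ (algebraMap Fq (E n)) x f.denom ≠ 0)).card + (ℓ - 1)
        = (p ^ a) ^ n := by
      have hneg : (univ.filter (fun x : E n =>
          ¬ Polynomial.eval₂ (algebraMap Fq (E n)) x f.denom ≠ 0)) =
          Finset.image (fun j => algebraMap Fq (E n) (θ j)) univ := by
        ext x
        simp only [Finset.mem_filter, Finset.mem_univ, true_and, Finset.mem_image, not_not]
        rw [hden, Polynomial.eval₂_finset_prod]
        constructor
        · intro hx
          obtain ⟨j, -, hj⟩ := Finset.prod_eq_zero_iff.mp hx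
          refine ⟨j, ?_⟩
          rw [Polynomial.eval₂_pow, Polynomial.eval₂_sub, Polynomial.eval₂_X,
            Polynomial.eval₂_C] at hj
          have h0 := pow_eq_zero_iff (hdθ j).ne' |>.mp hj
          exact (sub_eq_zero.mp h0).symm
        · rintro ⟨j, rfl⟩
          apply Finset.prod_eq_zero (Finset.mem_univ j)
          rw [Polynomial.eval₂_pow, Polynomial.eval₂_sub, Polynomial.eval₂_X,
            Polynomial.eval₂_C, sub_self]
          exact zero_pow (hdθ j).ne'
      have hcount : (univ.filter (fun x : E n =>
          ¬ Polynomial.eval₂ (algebraMap Fq (E n)) x f.denom ≠ 0)).card = ℓ - 1 := by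
        rw [hneg, Finset.card_image_of_injective _
          (fun x y hxy => hθ ((algebraMap Fq (E n)).injective hxy)),
          Finset.card_univ, Fintype.card_fin]
      calc (univ.filter (fun x : E n =>
            Polynomial.eval₂ (algebraMap Fq (E n)) x f.denom ≠ 0)).card + (ℓ - 1)
          = (univ.filter (fun x : E n =>
            Polynomial.eval₂ (algebraMap Fq (E n)) x f.denom ≠ 0)).card
            + (univ.filter (fun x : E n =>
            ¬ Polynomial.eval₂ (algebraMap Fq (E n)) x f.denom ≠ 0)).card := by rw [hcount]
        _ = (univ : Finset (E n)).card :=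
            Finset.card_filter_add_card_filter_not _
        _ = (p ^ a) ^ n := by rw [Finset.card_univ, hE n hn]
    -- S 0 n equals the cardinality of the filter
    have hS0 : S (0 : ZMod p) n = ((univ.filter (fun x : E n =>
        Polynomial.eval₂ (algebraMap Fq (E n)) x f.denom ≠ 0)).card :
          CyclotomicField p ℚ) := by
      rw [hS 0 n hn]
      simp only [zero_mul, AddChar.map_zero_eq_one]
      rw [Finset.sum_const, nsmul_eq_mul, mul_one]
    -- curve point count equals the full character sum
    have hAS : ((Nat.card {xy : E n × E n //
        Polynomial.eval₂ (algebraMap Fq (E n)) xy.1 f.denom ≠ 0 ∧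
        xy.2 ^ p - xy.2 = RatFunc.eval (algebraMap Fq (E n)) xy.1 f} : ℕ) :
          CyclotomicField p ℚ)
        = ∑ c : ZMod p, S c n := by
      have e : {xy : E n × E n //
          Polynomial.eval₂ (algebraMap Fq (E n)) xy.1 f.denom ≠ 0 ∧
          xy.2 ^ p - xy.2 = RatFunc.eval (algebraMap Fq (E n)) xy.1 f}
          ≃ Σ x : {x : E n // Polynomial.eval₂ (algebraMap Fq (E n)) x f.denom ≠ 0},
            {y : E n // y ^ p - y = RatFunc.eval (algebraMap Fq (E n)) x.1 f} :=
        { toFun := fun z => ⟨⟨z.1.1, z.2.1⟩, ⟨z.1.2, z.2.2⟩⟩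
          invFun := fun w => ⟨(w.1.1, w.2.1), ⟨w.1.2, w.2.2⟩⟩
          left_inv := fun z => rfl
          right_inv := fun w => rfl }
      have h1 : Nat.card {xy : E n × E n //
          Polynomial.eval₂ (algebraMap Fq (E n)) xy.1 f.denom ≠ 0 ∧
          xy.2 ^ p - xy.2 = RatFunc.eval (algebraMap Fq (E n)) xy.1 f}
          = ∑ x : {x : E n // Polynomial.eval₂ (algebraMap Fq (E n)) x f.denom ≠ 0},
            Nat.card {y : E n // y ^ p - y = RatFunc.eval (algebraMap Fq (E n)) x.1 f} := by
        rw [Nat.card_congr e, Nat.card_eq_fintype_card, Fintype.card_sigma]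
        exact Finset.sum_congr rfl fun x _ => (Nat.card_eq_fintype_card).symm
      have h2 : ∀ x : E n, Nat.card {y : E n //
          y ^ p - y = RatFunc.eval (algebraMap Fq (E n)) x f}
          = if Algebra.trace (ZMod p) (E n)
              (RatFunc.eval (algebraMap Fq (E n)) x f) = 0 then p else 0 :=
        fun x => ASaux2.AS_card _
      have h3 : ∑ c : ZMod p, S c n
          = ∑ x ∈ univ.filter (fun x : E n =>
              Polynomial.eval₂ (algebraMap Fq (E n)) x f.denom ≠ 0),
            (if Algebra.trace (ZMod p) (E n)
              (RatFunc.eval (algebraMap Fq (E n)) x f) = 0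
              then (p : CyclotomicField p ℚ) else 0) := by
        calc ∑ c : ZMod p, S c n
            = ∑ c : ZMod p, ∑ x ∈ univ.filter (fun x : E n =>
                Polynomial.eval₂ (algebraMap Fq (E n)) x f.denom ≠ 0),
              ψ (c * Algebra.trace (ZMod p) (E n)
                (RatFunc.eval (algebraMap Fq (E n)) x f)) :=
              Finset.sum_congr rfl fun c _ => hS c n hn
          _ = ∑ x ∈ univ.filter (fun x : E n =>
                Polynomial.eval₂ (algebraMap Fq (E n)) x f.denom ≠ 0),
              ∑ c : ZMod p, ψ (c * Algebra.trace (ZMod p) (E n)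
                (RatFunc.eval (algebraMap Fq (E n)) x f)) := Finset.sum_comm
          _ = _ := by
              refine Finset.sum_congr rfl fun x _ => ?_
              rw [AddChar.sum_mulShift _ (AddChar.IsPrimitive.of_ne_one hψ)]
              rw [ZMod.card]
              split_ifs <;> simp
      rw [h3, h1]
      push_cast
      rw [Finset.sum_subtype
        (p := fun x : E n => Polynomial.eval₂ (algebraMap Fq (E n)) x f.denom ≠ 0)
        (univ.filter (fun x : E n =>
          Polynomial.eval₂ (algebraMap Fq (E n)) x f.denom ≠ 0))
        (fun x => by simp) (fun x => (if Algebra.trace (ZMod p) (E n)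
          (RatFunc.eval (algebraMap Fq (E n)) x f) = 0
          then (p : CyclotomicField p ℚ) else 0))]
      refine Finset.sum_congr rfl fun x _ => ?_
      rw [h2 x.1]
      split_ifs <;> simp
    -- split the sum over ZMod p
    have hsplit : ∑ c : ZMod p, S c n
        = S (0 : ZMod p) n + ∑ u : (ZMod p)ˣ, S (u : ZMod p) n := by
      rw [← Finset.add_sum_erase univ (fun c => S c n) (Finset.mem_univ (0 : ZMod p))]
      congr 1
      have himg : (univ : Finset (ZMod p)).erase 0
          = Finset.image (fun u : (ZMod p)ˣ => (u : ZMod p)) univ := by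
        ext c
        simp only [Finset.mem_erase, Finset.mem_univ, and_true, Finset.mem_image, true_and]
        constructor
        · intro hc
          exact ⟨Units.mk0 c hc, rfl⟩
        · rintro ⟨u, rfl⟩
          exact u.ne_zero
      rw [himg, Finset.sum_image (fun x _ y _ hxy => Units.ext hxy)]
    -- assemble
    have hNcast : ((N n : ℕ) : CyclotomicField p ℚ)
        = (ℓ : CyclotomicField p ℚ) +
        ((Nat.card {xy : E n × E n //
          Polynomial.eval₂ (algebraMap Fq (E n)) xy.1 f.denom ≠ 0 ∧
          xy.2 ^ p - xy.2 = RatFunc.eval (algebraMap Fq (E n)) xy.1 f} : ℕ) :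
            CyclotomicField p ℚ) := by
      rw [hN n hn]; push_cast; ring
    rw [hNcast, hAS, hsplit, hS0]
    have hfc : ((univ.filter (fun x : E n =>
        Polynomial.eval₂ (algebraMap Fq (E n)) x f.denom ≠ 0)).card :
          CyclotomicField p ℚ)
        + ((ℓ - 1 : ℕ) : CyclotomicField p ℚ)
        = (((p ^ a) ^ n : ℕ) : CyclotomicField p ℚ) := by
      exact_mod_cast congrArg (Nat.cast : ℕ → CyclotomicField p ℚ) hfiltcard
    have hl1 : ((ℓ - 1 : ℕ) : CyclotomicField p ℚ)
        = (ℓ : CyclotomicField p ℚ) - 1 := by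
      rw [Nat.cast_sub hℓ, Nat.cast_one]
    have hqq : (((p ^ a) ^ n : ℕ) : CyclotomicField p ℚ) = q ^ n := by
      rw [hqdef]; push_cast; ring
    rw [hl1, hqq] at hfc
    linear_combination hfc
  -- Step 2: power series manipulation
  set A : PowerSeries (CyclotomicField p ℚ) := PowerSeries.mk
      (fun k => if k = 0 then 0 else ∑ u : (ZMod p)ˣ, S (u : ZMod p) k) with hAdef
  have hAc : PowerSeries.constantCoeff A = 0 := by
    rw [hAdef, ← PowerSeries.coeff_zero_eq_constantCoeff, PowerSeries.coeff_mk]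
    simp
  have hRHS : PowerSeries.X * (∏ u : (ZMod p)ˣ, L u).derivativeFun
      = (∏ u : (ZMod p)ˣ, L u) * A := by
    rw [ASaux.ode_prod univ L
      (fun u => PowerSeries.mk (fun k => if k = 0 then 0 else S (u : ZMod p) k))
      (fun u _ => by exact hL u)]
    congr 1
    ext n
    rw [map_sum]
    simp only [PowerSeries.coeff_mk, hAdef]
    by_cases hn : n = 0 <;> simp [hn]
  have hLHS : PowerSeries.X * ((1 - PowerSeries.X) *
      (1 - PowerSeries.C q * PowerSeries.X) * Z).derivativeFun
      = ((1 - PowerSeries.X) * (1 - PowerSeries.C q * PowerSeries.X) * Z) * A := by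
    have hX1 : (1 - PowerSeries.X : PowerSeries (CyclotomicField p ℚ))
        = 1 - PowerSeries.C 1 * PowerSeries.X := by rw [map_one, one_mul]
    set B1 : PowerSeries (CyclotomicField p ℚ) := PowerSeries.mk
      (fun k => if k = 0 then 0 else (1 : CyclotomicField p ℚ) ^ k) with hB1def
    set Bq : PowerSeries (CyclotomicField p ℚ) := PowerSeries.mk
      (fun k => if k = 0 then 0 else q ^ k) with hBqdef
    set Nser : PowerSeries (CyclotomicField p ℚ) := PowerSeries.mk
      (fun k => if k = 0 then 0 else ((N k : ℕ) : CyclotomicField p ℚ))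
      with hNserdef
    have hgeom1 : (1 - PowerSeries.C 1 * PowerSeries.X) * B1
        = PowerSeries.C 1 * PowerSeries.X := ASaux.geom_aux 1
    have hgeomq : (1 - PowerSeries.C q * PowerSeries.X) * Bq
        = PowerSeries.C q * PowerSeries.X := ASaux.geom_aux q
    have hABN : Nser - B1 - Bq = A := by
      ext n
      rw [map_sub, map_sub]
      simp only [PowerSeries.coeff_mk, hAdef, hNserdef, hB1def, hBqdef]
      by_cases hn : n = 0
      · simp [hn]
      · have h1n : 1 ≤ n := Nat.one_le_iff_ne_zero.mpr hn
        simp only [hn, if_false]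
        rw [key n h1n, one_pow]
        ring
    rw [hX1]
    rw [PowerSeries.derivativeFun_mul
      ((1 - PowerSeries.C 1 * PowerSeries.X) * (1 - PowerSeries.C q * PowerSeries.X)) Z,
      PowerSeries.derivativeFun_mul (1 - PowerSeries.C 1 * PowerSeries.X)
        (1 - PowerSeries.C q * PowerSeries.X),
      ASaux.derivF_one_sub, ASaux.derivF_one_sub,
      smul_eq_mul, smul_eq_mul, smul_eq_mul, smul_eq_mul]
    linear_combination
      ((1 - PowerSeries.C 1 * PowerSeries.X) * (1 - PowerSeries.C q * PowerSeries.X)) * hZ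
      + (Z * (1 - PowerSeries.C 1 * PowerSeries.X)) * hgeomq
      + (Z * (1 - PowerSeries.C q * PowerSeries.X)) * hgeom1
      + ((1 - PowerSeries.C 1 * PowerSeries.X)
          * (1 - PowerSeries.C q * PowerSeries.X) * Z) * hABN
  have hc1 : PowerSeries.constantCoeff
      ((1 - PowerSeries.X) * (1 - PowerSeries.C q * PowerSeries.X) * Z) = 1 := by
    rw [map_mul, map_mul, map_sub, map_sub, map_mul, map_one, hZ0,
      PowerSeries.constantCoeff_X, PowerSeries.constantCoeff_C]
    ring_nf
  have hc2 : PowerSeries.constantCoeff (∏ u : (ZMod p)ˣ, L u) = 1 := by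
    rw [map_prod]
    simp [hL0]
  exact ASaux.ode_unique hAc (hc1.trans hc2.symm) hLHS hRHS
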